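/- arXiv:cond-mat/0410686 — 3 statements merged into one kernel-verified Lean document; each statement's English description precedes it below -/
import Mathlib

section
/- The Fortuin-Kasteleyn representation: for a finite graph G = (V, E), positive reals v_e for each edge e, and q ≥ 1 a natural number, the sum over spin configurations σ : V → {0,...,q-1} of the product over edges e = {i,j} of (1 + v_e·δ(σ_i,σ_j)) equals the sum over edge subsets X ⊆ E of (∏_{e ∈ X} v_e)·q^{N(X)}, where N(X) is the number of connected components of the graph (V, X) (counting isolated vertices as components). -/
open Finset

lemma fk_count {V : Type*} [Fintype V] [DecidableEq V] (X : Finset (Sym2 V)) (q : ℕ) :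
    Nat.card {σ : V → Fin q // ∀ e ∈ X, (e.map σ).IsDiag} =
      q ^ Nat.card (SimpleGraph.fromEdgeSet (X : Set (Sym2 V))).ConnectedComponent := by
  classical
  set G := SimpleGraph.fromEdgeSet (X : Set (Sym2 V)) with hG
  have hconst : ∀ (σ : V → Fin q), (∀ e ∈ X, (e.map σ).IsDiag) →
      ∀ a b : V, G.Reachable a b → σ a = σ b := by
    intro σ hσ a b hab
    obtain ⟨w⟩ := hab
    induction w with
    | nil => rfl
    | cons h _ ih =>
      rename_i x y z _
      rw [hG, SimpleGraph.fromEdgeSet_adj] at h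
      have := hσ _ h.1
      rw [Sym2.map_pair_eq, Sym2.mk_isDiag_iff] at this
      rw [this, ih]
  have e : {σ : V → Fin q // ∀ e ∈ X, (e.map σ).IsDiag} ≃
      (G.ConnectedComponent → Fin q) :=
    { toFun := fun σ => SimpleGraph.ConnectedComponent.lift σ.1
        (fun a b p _ => hconst σ.1 σ.2 a b ⟨p⟩)
      invFun := fun f => ⟨fun x => f (G.connectedComponentMk x), by
        intro e he
        induction e using Sym2.ind with
        | _ a b =>
          rw [Sym2.map_pair_eq, Sym2.mk_isDiag_iff]
          by_cases hab : a = b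
          · rw [hab]
          · have : G.Adj a b := by
              rw [hG, SimpleGraph.fromEdgeSet_adj]; exact ⟨he, hab⟩
            rw [SimpleGraph.ConnectedComponent.sound this.reachable]⟩
      left_inv := fun σ => by
        apply Subtype.ext
        funext x
        exact SimpleGraph.ConnectedComponent.lift_mk
          (h := fun a b p _ => hconst σ.1 σ.2 a b ⟨p⟩)
      right_inv := fun f => by
        funext c
        induction c using SimpleGraph.ConnectedComponent.ind with
        | _ x => exact SimpleGraph.ConnectedComponent.lift_mk }
  rw [Nat.card_congr e, Nat.card_fun, Nat.card_eq_fintype_card (α := Fin q), Fintype.card_fin]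

/-- The Fortuin–Kasteleyn representation: for a finite graph with edge set `E`
(non-diagonal unordered pairs), positive edge weights `v`, and `q ≥ 1`,
`∑_σ ∏_{e={i,j}∈E} (1 + v_e δ(σᵢ,σⱼ)) = ∑_{X⊆E} (∏_{e∈X} v_e) q^{N(X)}`,
where `N(X)` is the number of connected components of the spanning subgraph
`(V, X)` (isolated vertices count as components). -/
theorem stmt_1 {V : Type*} [Fintype V] [DecidableEq V]
    (E : Finset (Sym2 V)) (hE : ∀ e ∈ E, ¬ e.IsDiag)
    (v : Sym2 V → ℝ) (hv : ∀ e ∈ E, 0 < v e) (q : ℕ) (hq : 1 ≤ q) :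
    ∑ σ : V → Fin q, ∏ e ∈ E, (1 + v e * (if (e.map σ).IsDiag then 1 else 0)) =
      ∑ X ∈ E.powerset, (∏ e ∈ X, v e) *
        (q : ℝ) ^ Nat.card (SimpleGraph.fromEdgeSet (X : Set (Sym2 V))).ConnectedComponent := by
  classical
  have expand : ∀ σ : V → Fin q,
      ∏ e ∈ E, (1 + v e * (if (e.map σ).IsDiag then 1 else 0)) =
      ∑ X ∈ E.powerset, ∏ e ∈ X, (v e * (if (e.map σ).IsDiag then 1 else 0)) := by
    intro σ
    have := Finset.prod_add (fun e => v e * (if (e.map σ).IsDiag then 1 else 0))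
      (fun _ => (1 : ℝ)) E
    simp only [add_comm, Finset.prod_const_one, mul_one] at this ⊢
    rw [this]
  rw [Finset.sum_congr rfl (fun σ _ => expand σ), Finset.sum_comm]
  refine Finset.sum_congr rfl (fun X hX => ?_)
  have : ∀ σ : V → Fin q, ∏ e ∈ X, (v e * (if (e.map σ).IsDiag then 1 else 0)) =
      (∏ e ∈ X, v e) * (if ∀ e ∈ X, (e.map σ).IsDiag then 1 else 0) := by
    intro σ
    rw [Finset.prod_mul_distrib, Finset.prod_boole]
    congr
  rw [Finset.sum_congr rfl (fun σ _ => this σ), ← Finset.mul_sum,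
    Finset.sum_boole]
  congr 1
  rw [← Nat.cast_pow, ← fk_count X q, Nat.card_eq_fintype_card, Fintype.card_subtype]
end

section
/- For any finite connected nonempty set of bonds γ (edges of the lattice Z^d, d ≥ 1), the inequality |γ|/d - |S(γ)| + 1 ≤ 0 holds, where |γ| is the number of bonds of γ and S(γ) is the set of endpoints of bonds of γ. -/
abbrev Vd (d : ℕ) := Fin d → ℤ

/-- Endpoints of an unordered pair as a `Finset`. -/
def Sym2.endFinset {V : Type*} [DecidableEq V] (e : Sym2 V) : Finset V :=
  Sym2.lift ⟨fun a b => ({a, b} : Finset V), fun a b => Finset.pair_comm a b⟩ e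

/-- Nearest-neighbor bond of `ℤ^d`. -/
def IsBond {d : ℕ} (e : Sym2 (Vd d)) : Prop :=
  ∃ x y : Vd d, e = s(x, y) ∧ (∑ i, |x i - y i|) = 1

/-- Vertex set of a finite set of bonds. -/
def bondVerts {d : ℕ} (γ : Finset (Sym2 (Vd d))) : Finset (Vd d) :=
  γ.biUnion Sym2.endFinset

/-- An edge set is connected if any two of its endpoints are joined by a path
using only edges of `γ`. -/
def EdgeConnected {d : ℕ} (γ : Finset (Sym2 (Vd d))) : Prop :=
  ∀ x ∈ bondVerts γ, ∀ y ∈ bondVerts γ,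
    (SimpleGraph.fromEdgeSet (γ : Set (Sym2 (Vd d)))).Reachable x y

lemma endFinset_mk {V : Type*} [DecidableEq V] (a b : V) :
    Sym2.endFinset s(a, b) = {a, b} := rfl

lemma update_lt {d : ℕ} (v : Vd d) (i : Fin d) : v < Function.update v i (v i + 1) := by
  apply lt_of_le_of_ne
  · intro j
    rcases eq_or_ne j i with rfl | h
    · simp
    · simp [Function.update_of_ne h]
  · intro h; have := congrFun h i; simp at this

lemma bond_decomp {d : ℕ} (e : Sym2 (Vd d)) (h : IsBond e) :
    ∃ (i : Fin d) (x : Vd d), e = s(x, Function.update x i (x i + 1)) := by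
  obtain ⟨x, y, rfl, hsum⟩ := h
  have hnn : ∀ j ∈ Finset.univ, (0:ℤ) ≤ |x j - y j| := fun j _ => abs_nonneg _
  have hex : ∃ i, |x i - y i| ≠ 0 := by
    by_contra h'
    push_neg at h'
    rw [Finset.sum_eq_zero (fun j _ => h' j)] at hsum
    exact one_ne_zero hsum.symm
  obtain ⟨i, hi⟩ := hex
  have h1 : |x i - y i| = 1 := by
    have hle : |x i - y i| ≤ ∑ j, |x j - y j| :=
      Finset.single_le_sum hnn (Finset.mem_univ i)
    have := abs_nonneg (x i - y i)
    omega
  have hrest : ∀ j, j ≠ i → x j = y j := by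
    have hsplit : |x i - y i| + ∑ j ∈ Finset.univ.erase i, |x j - y j| = 1 :=
      (Finset.add_sum_erase _ _ (Finset.mem_univ i)).trans hsum
    have hz : ∑ j ∈ Finset.univ.erase i, |x j - y j| = 0 := by omega
    intro j hj
    have h0 := (Finset.sum_eq_zero_iff_of_nonneg
      (fun j _ => abs_nonneg (x j - y j))).mp hz j (by simp [hj])
    have := abs_eq_zero.mp h0
    omega
  rcases (abs_eq (by norm_num : (0:ℤ) ≤ 1)).mp h1 with hc | hc
  · refine ⟨i, y, ?_⟩
    have hx : x = Function.update y i (y i + 1) := by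
      funext j
      rcases eq_or_ne j i with rfl | hj
      · simp; omega
      · rw [Function.update_of_ne hj]; exact hrest j hj
    rw [hx, Sym2.eq_swap]
  · refine ⟨i, x, ?_⟩
    have hy : y = Function.update x i (x i + 1) := by
      funext j
      rcases eq_or_ne j i with rfl | hj
      · simp; omega
      · rw [Function.update_of_ne hj]; exact (hrest j hj).symm
    rw [hy]

/-- For any finite connected nonempty set of bonds `γ` of `ℤ^d` (`d ≥ 1`),
`|γ|/d - |S(γ)| + 1 ≤ 0`. -/
theorem stmt_2 {d : ℕ} (hd : 1 ≤ d) (γ : Finset (Sym2 (Vd d)))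
    (hne : γ.Nonempty) (hb : ∀ e ∈ γ, IsBond e) (hc : EdgeConnected γ) :
    (γ.card : ℝ) / d - (bondVerts γ).card + 1 ≤ 0 := by
  classical
  set V := bondVerts γ with hV
  -- V is nonempty
  have hVne : V.Nonempty := by
    obtain ⟨e, he⟩ := hne
    obtain ⟨i, x, rfl⟩ := bond_decomp e (hb e he)
    exact ⟨x, Finset.mem_biUnion.mpr ⟨_, he, by rw [endFinset_mk]; simp⟩⟩
  obtain ⟨v, hvV, hvmax⟩ : ∃ v ∈ V, ∀ x ∈ V, ¬ v < x := by
    obtain ⟨v, hv⟩ := Finset.exists_maximal hVne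
    exact ⟨v, hv.1, fun x hx hlt => lt_irrefl v (lt_of_lt_of_le hlt (hv.2 hx hlt.le))⟩
  -- the injection
  set f : Sym2 (Vd d) → Fin d × Vd d := fun e =>
    if h : ∃ (i : Fin d) (x : Vd d), e = s(x, Function.update x i (x i + 1)) then
      (h.choose, h.choose_spec.choose)
    else (⟨0, hd⟩, fun _ => 0) with hf
  have hspec : ∀ e ∈ γ,
      e = s((f e).2, Function.update (f e).2 (f e).1 ((f e).2 (f e).1 + 1)) := by
    intro e he
    have h := bond_decomp e (hb e he)
    simp only [hf, dif_pos h]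
    exact h.choose_spec.choose_spec
  have hmaps : ∀ e ∈ γ, f e ∈ (Finset.univ : Finset (Fin d)) ×ˢ V.erase v := by
    intro e he
    have hs := hspec e he
    obtain ⟨i, x, hfe⟩ : ∃ i x, f e = (i, x) := ⟨_, _, rfl⟩
    rw [hfe] at hs ⊢
    have hx : x ∈ V := by
      refine Finset.mem_biUnion.mpr ⟨e, he, ?_⟩
      rw [hs, endFinset_mk]; simp
    have hy : Function.update x i (x i + 1) ∈ V := by
      refine Finset.mem_biUnion.mpr ⟨e, he, ?_⟩
      rw [hs, endFinset_mk]; simp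
    have hne' : x ≠ v := by
      intro hEq
      exact hvmax _ hy (hEq ▸ update_lt x i)
    exact Finset.mem_product.mpr ⟨Finset.mem_univ _, Finset.mem_erase.mpr ⟨hne', hx⟩⟩
  have hinj : Set.InjOn f γ := by
    intro e he e' he' hEq
    rw [hspec e he, hspec e' he', hEq]
  have hcard : γ.card ≤ d * (V.card - 1) := by
    have := Finset.card_le_card_of_injOn f hmaps hinj
    rwa [Finset.card_product, Finset.card_univ, Fintype.card_fin,
      Finset.card_erase_of_mem hvV] at this
  have hV1 : 1 ≤ V.card := Finset.card_pos.mpr ⟨v, hvV⟩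
  have hdpos : (0:ℝ) < d := by exact_mod_cast Nat.lt_of_lt_of_le Nat.zero_lt_one hd
  have h2 : (γ.card : ℝ) ≤ d * ((V.card : ℝ) - 1) := by
    have : ((γ.card : ℕ) : ℝ) ≤ ((d * (V.card - 1) : ℕ) : ℝ) := by exact_mod_cast hcard
    rwa [Nat.cast_mul, Nat.cast_sub hV1, Nat.cast_one] at this
  rw [sub_add, sub_nonpos, div_le_iff₀ hdpos]
  nlinarith
end

section
/- In the ground-state diagram of the formal Hamiltonian H(X) = -β_s|X_s| - β_b|X_b| + |S(X)| - C(X) on bond configurations of the semi-infinite lattice L = Z^{d-1} × Z^+, the empty configuration X^f = ∅ is a ground state whenever β_b < 1/d and β_s < 1/(d-1): for any configuration Y differing from ∅ on finitely many bonds, H(Y|∅) = H(Y) - H(∅) ≥ 0. -/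
/-- Site of the semi-infinite lattice `𝕃 = ℤ^{d-1} × ℤ⁺`. -/
abbrev SILSite (d : ℕ) := (Fin (d - 1) → ℤ) × ℕ

/-- Nearest-neighbor bond of the semi-infinite lattice. -/
def IsSILBond {d : ℕ} (e : Sym2 (SILSite d)) : Prop :=
  ∃ x y : SILSite d, e = s(x, y) ∧
    (∑ i, |x.1 i - y.1 i|) + |(x.2 : ℤ) - (y.2 : ℤ)| = 1

/-- Vertex set `S(Y)` of a finite set of bonds. -/
def silVerts {d : ℕ} (Y : Finset (Sym2 (SILSite d))) : Finset (SILSite d) :=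
  Y.biUnion Sym2.endFinset

/-- The number `C(Y)` of connected components of a finite bond configuration
(isolated sites are not counted): the number of classes of bonds of `Y` under the
equivalence generated by "sharing an endpoint". -/
noncomputable def numComp {d : ℕ} (Y : Finset (Sym2 (SILSite d))) : ℕ :=
  Nat.card (Quot (fun e f : {e // e ∈ Y} => ∃ x, x ∈ e.1 ∧ x ∈ f.1))

namespace SILAux

variable {d : ℕ}

/-- Ranking function used to orient bonds and pick maximal vertices. -/
def rank (v : SILSite d) : ℤ ×ₗ (ℤ ×ₗ ℕ) :=
  toLex (∑ i, v.1 i, toLex (-(v.2 : ℤ), Encodable.encode v))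

lemma rank_inj : Function.Injective (rank (d := d)) := by
  intro a b h
  have h2 : Encodable.encode a = Encodable.encode b :=
    congrArg (fun x : ℤ ×ₗ (ℤ ×ₗ ℕ) => (ofLex (ofLex x).2).2) h
  exact Encodable.encode_injective h2

lemma rank_lt_of_sum_lt {u v : SILSite d} (h : ∑ i, u.1 i < ∑ i, v.1 i) :
    rank u < rank v := by
  rw [rank, rank, Prod.Lex.lt_iff]
  exact Or.inl h

lemma rank_lt_of_snd {u v : SILSite d} (h1 : ∑ i, u.1 i = ∑ i, v.1 i)
    (h2 : v.2 < u.2) : rank u < rank v := by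
  rw [rank, rank, Prod.Lex.lt_iff]
  refine Or.inr ⟨h1, ?_⟩
  rw [Prod.Lex.lt_iff]
  left
  show -(u.2 : ℤ) < -(v.2 : ℤ)
  omega

lemma sum_diff_single {f g : Fin (d-1) → ℤ} (i : Fin (d-1))
    (hoff : ∀ j, j ≠ i → f j = g j) : (∑ j, f j) - ∑ j, g j = f i - g i := by
  rw [← Finset.sum_sub_distrib]
  rw [Finset.sum_eq_single i (fun j _ hj => by rw [hoff j hj]; ring) (by simp)]

lemma bond_dist {x y : SILSite d} (h : IsSILBond (d := d) s(x, y)) :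
    (∑ i, |x.1 i - y.1 i|) + |(x.2 : ℤ) - (y.2 : ℤ)| = 1 := by
  obtain ⟨a, b, hab, hd⟩ := h
  rw [Sym2.eq_iff] at hab
  rcases hab with ⟨hx, hy⟩ | ⟨hx, hy⟩
  · subst hx; subst hy; exact hd
  · subst hx; subst hy
    rw [abs_sub_comm ((x.2 : ℤ)), Finset.sum_congr rfl
      (fun i _ => abs_sub_comm (x.1 i) (y.1 i))]
    exact hd

lemma bond_ne {x y : SILSite d} (h : IsSILBond (d := d) s(x, y)) : x ≠ y := by
  intro he
  have hd := bond_dist h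
  subst he
  simp at hd

lemma bond_cases {x y : SILSite d}
    (h : (∑ i, |x.1 i - y.1 i|) + |(x.2 : ℤ) - (y.2 : ℤ)| = 1) :
    (∃ i, x.2 = y.2 ∧ (∀ j, j ≠ i → x.1 j = y.1 j) ∧
      (y.1 i = x.1 i + 1 ∨ y.1 i = x.1 i - 1))
    ∨ (x.1 = y.1 ∧ (y.2 = x.2 + 1 ∨ x.2 = y.2 + 1)) := by
  have hA : 0 ≤ ∑ i, |x.1 i - y.1 i| := Finset.sum_nonneg fun i _ => abs_nonneg _
  have hB : 0 ≤ |(x.2 : ℤ) - (y.2 : ℤ)| := abs_nonneg _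
  by_cases hx2 : x.2 = y.2
  · -- horizontal
    have hB0 : |(x.2 : ℤ) - (y.2 : ℤ)| = 0 := by rw [hx2]; simp
    have hA1 : ∑ i, |x.1 i - y.1 i| = 1 := by omega
    have hne : ∃ i, x.1 i ≠ y.1 i := by
      by_contra hc
      push_neg at hc
      have : ∑ i, |x.1 i - y.1 i| = 0 :=
        Finset.sum_eq_zero fun i _ => by rw [hc i]; simp
      omega
    obtain ⟨i, hi⟩ := hne
    have hterm : 1 ≤ |x.1 i - y.1 i| := Int.one_le_abs (sub_ne_zero.2 hi)
    have hsplit : |x.1 i - y.1 i| + ∑ j ∈ Finset.univ.erase i, |x.1 j - y.1 j|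
        = ∑ j, |x.1 j - y.1 j| := Finset.add_sum_erase _ (fun j => |x.1 j - y.1 j|) (Finset.mem_univ i)
    have hrest0 : ∑ j ∈ Finset.univ.erase i, |x.1 j - y.1 j| = 0 := by
      have hrest : 0 ≤ ∑ j ∈ Finset.univ.erase i, |x.1 j - y.1 j| :=
        Finset.sum_nonneg fun j _ => abs_nonneg _
      omega
    have hoff : ∀ j, j ≠ i → x.1 j = y.1 j := by
      intro j hj
      have := (Finset.sum_eq_zero_iff_of_nonneg
        (fun j _ => abs_nonneg (x.1 j - y.1 j))).1 hrest0 j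
        (Finset.mem_erase.2 ⟨hj, Finset.mem_univ j⟩)
      have := abs_eq_zero.1 this
      omega
    have hi1 : |x.1 i - y.1 i| = 1 := by omega
    rcases abs_eq (by norm_num : (0:ℤ) ≤ 1) |>.1 hi1 with h1 | h1
    · exact Or.inl ⟨i, hx2, hoff, Or.inr (by omega)⟩
    · exact Or.inl ⟨i, hx2, hoff, Or.inl (by omega)⟩
  · -- vertical
    have hB1 : 1 ≤ |(x.2 : ℤ) - (y.2 : ℤ)| := by
      have : (x.2 : ℤ) ≠ (y.2 : ℤ) := by exact_mod_cast hx2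
      exact Int.one_le_abs (sub_ne_zero.2 this)
    have hA0 : ∑ i, |x.1 i - y.1 i| = 0 := by omega
    have h1 : x.1 = y.1 := by
      funext j
      have := (Finset.sum_eq_zero_iff_of_nonneg
        (fun j _ => abs_nonneg (x.1 j - y.1 j))).1 hA0 j (Finset.mem_univ j)
      have := abs_eq_zero.1 this
      omega
    have hB1' : |(x.2 : ℤ) - (y.2 : ℤ)| = 1 := by omega
    rcases abs_eq (by norm_num : (0:ℤ) ≤ 1) |>.1 hB1' with h2 | h2
    · exact Or.inr ⟨h1, Or.inr (by omega)⟩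
    · exact Or.inr ⟨h1, Or.inl (by omega)⟩

/-- endpoint of smaller rank -/
noncomputable def amin (e : Sym2 (SILSite d)) : SILSite d :=
  Sym2.lift ⟨fun x y => if rank x ≤ rank y then x else y, by
    intro a b
    dsimp only
    rcases lt_trichotomy (rank a) (rank b) with h | h | h
    · rw [if_pos h.le, if_neg (not_le.2 h)]
    · rw [rank_inj h]
    · rw [if_neg (not_le.2 h), if_pos h.le]⟩ e

lemma amin_mk (x y : SILSite d) :
    amin s(x, y) = if rank x ≤ rank y then x else y := by
  rw [amin, Sym2.lift_mk]

lemma amin_mem (e : Sym2 (SILSite d)) : amin e ∈ e := by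
  induction e using Sym2.ind with
  | _ x y =>
    rw [amin_mk]
    split <;> simp

lemma rank_amin_le (e : Sym2 (SILSite d)) {u : SILSite d} (hu : u ∈ e) :
    rank (amin e) ≤ rank u := by
  induction e using Sym2.ind with
  | _ x y =>
    rw [amin_mk]
    rcases Sym2.mem_iff.1 hu with rfl | rfl
    · split
      · exact le_refl _
      · exact (not_le.1 (by assumption)).le
    · split
      · assumption
      · exact le_refl _

lemma mem_endFinset {V : Type*} [DecidableEq V] {x : V} {e : Sym2 V} :
    x ∈ e.endFinset ↔ x ∈ e := by
  induction e using Sym2.ind with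
  | _ a b =>
    rw [Sym2.endFinset, Sym2.lift_mk]
    simp [Sym2.mem_iff]

/-- Characterization of the other endpoint of a bond whose `amin` is `v`. -/
lemma other_cases {v u : SILSite d} (hb : IsSILBond (d := d) s(v, u))
    (hlt : rank v < rank u) :
    (∃ i, u = (Function.update v.1 i (v.1 i + 1), v.2))
    ∨ (v.2 ≠ 0 ∧ u = (v.1, v.2 - 1)) := by
  have hdist := bond_dist hb
  rcases bond_cases hdist with ⟨i, h2, hoff, hi⟩ | ⟨h1, h2⟩
  · -- horizontal
    left
    refine ⟨i, ?_⟩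
    rcases hi with hplus | hminus
    · have hfst : u.1 = Function.update v.1 i (v.1 i + 1) := by
        funext j
        by_cases hj : j = i
        · subst hj; rw [Function.update_self]; exact hplus
        · rw [Function.update_of_ne hj]; exact (hoff j hj).symm
      exact Prod.ext hfst h2.symm
    · exfalso
      have hsum : (∑ j, u.1 j) - ∑ j, v.1 j = u.1 i - v.1 i :=
        sum_diff_single i (fun j hj => (hoff j hj).symm)
      have : (∑ j, u.1 j) < ∑ j, v.1 j := by omega
      exact absurd hlt (lt_asymm (rank_lt_of_sum_lt this))
  · -- vertical
    have hsums : ∑ j, u.1 j = ∑ j, v.1 j := by rw [h1]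
    rcases h2 with hup | hdown
    · exfalso
      exact absurd hlt (lt_asymm (rank_lt_of_snd hsums (by omega)))
    · right
      refine ⟨by omega, Prod.ext h1.symm ?_⟩
      show u.2 = v.2 - 1
      omega

noncomputable def fiber (Y : Finset (Sym2 (SILSite d))) (v : SILSite d) :
    Finset (Sym2 (SILSite d)) := Y.filter (fun e => amin e = v)

noncomputable def oth (v : SILSite d) (e : Sym2 (SILSite d)) : SILSite d :=
  if h : v ∈ e then Sym2.Mem.other' h else v

lemma fiber_spec {Y : Finset (Sym2 (SILSite d))} (hbond : ∀ e ∈ Y, IsSILBond e)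
    {v : SILSite d} {e : Sym2 (SILSite d)} (he : e ∈ fiber Y v) :
    ∃ hv : v ∈ e, oth v e = Sym2.Mem.other' hv ∧ s(v, oth v e) = e ∧
      IsSILBond s(v, oth v e) ∧ rank v < rank (oth v e) := by
  obtain ⟨heY, ham⟩ := Finset.mem_filter.1 he
  have hv : v ∈ e := ham ▸ amin_mem e
  refine ⟨hv, dif_pos hv, ?_, ?_, ?_⟩
  · rw [oth, dif_pos hv]; exact Sym2.other_spec' hv
  · rw [show s(v, oth v e) = e by rw [oth, dif_pos hv]; exact Sym2.other_spec' hv]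
    exact hbond e heY
  · have hspec : s(v, oth v e) = e := by
      rw [oth, dif_pos hv]; exact Sym2.other_spec' hv
    have hBond : IsSILBond s(v, oth v e) := by rw [hspec]; exact hbond e heY
    have hne : v ≠ oth v e := bond_ne hBond
    have hmemu : oth v e ∈ e := by
      have h' : oth v e ∈ s(v, oth v e) := Sym2.mem_mk_right _ _
      rwa [hspec] at h'
    have hle : rank v ≤ rank (oth v e) := by
      have h' := rank_amin_le e hmemu
      rwa [ham] at h'
    exact lt_of_le_of_ne hle (fun hh => hne (rank_inj hh))

lemma fiber_injOn {Y : Finset (Sym2 (SILSite d))} (hbond : ∀ e ∈ Y, IsSILBond e)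
    (v : SILSite d) : Set.InjOn (oth v) (fiber Y v) := by
  intro e he f hf hef
  obtain ⟨_, _, hspe, _, _⟩ := fiber_spec hbond he
  obtain ⟨_, _, hspf, _, _⟩ := fiber_spec hbond hf
  rw [← hspe, ← hspf, hef]

lemma fiber_oth_cases {Y : Finset (Sym2 (SILSite d))} (hbond : ∀ e ∈ Y, IsSILBond e)
    {v : SILSite d} {e : Sym2 (SILSite d)} (he : e ∈ fiber Y v) :
    (∃ i, oth v e = (Function.update v.1 i (v.1 i + 1), v.2))
    ∨ (v.2 ≠ 0 ∧ oth v e = (v.1, v.2 - 1)) := by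
  obtain ⟨hv, _, _, hB, hlt⟩ := fiber_spec hbond he
  exact other_cases hB hlt

lemma fiber_card_le {Y : Finset (Sym2 (SILSite d))} (hbond : ∀ e ∈ Y, IsSILBond e)
    (v : SILSite d) (hd : 3 ≤ d) : (fiber Y v).card ≤ d := by
  classical
  have hmaps : ∀ e ∈ fiber Y v, oth v e ∈
      insert ((v.1, v.2 - 1) : SILSite d)
        (Finset.image (fun i => ((Function.update v.1 i (v.1 i + 1), v.2) : SILSite d))
          Finset.univ) := by
    intro e he
    rcases fiber_oth_cases hbond he with ⟨i, hi⟩ | ⟨_, hi⟩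
    · exact Finset.mem_insert_of_mem
        (Finset.mem_image.2 ⟨i, Finset.mem_univ i, hi.symm⟩)
    · exact hi ▸ Finset.mem_insert_self _ _
  calc (fiber Y v).card ≤ _ := Finset.card_le_card_of_injOn _ hmaps (fiber_injOn hbond v)
    _ ≤ (Finset.image (fun i => ((Function.update v.1 i (v.1 i + 1), v.2) : SILSite d))
          Finset.univ).card + 1 := Finset.card_insert_le _ _
    _ ≤ (d - 1) + 1 := by
        have := Finset.card_image_le (s := (Finset.univ : Finset (Fin (d-1))))
          (f := fun i => ((Function.update v.1 i (v.1 i + 1), v.2) : SILSite d))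
        simpa using this
    _ ≤ d := by omega

lemma fiber_card_le_surface {Y : Finset (Sym2 (SILSite d))}
    (hbond : ∀ e ∈ Y, IsSILBond e) (v : SILSite d) (hv : v.2 = 0) :
    (fiber Y v).card ≤ d - 1 := by
  classical
  have hmaps : ∀ e ∈ fiber Y v, oth v e ∈
      Finset.image (fun i => ((Function.update v.1 i (v.1 i + 1), v.2) : SILSite d))
        Finset.univ := by
    intro e he
    rcases fiber_oth_cases hbond he with ⟨i, hi⟩ | ⟨hne, _⟩
    · exact Finset.mem_image.2 ⟨i, Finset.mem_univ i, hi.symm⟩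
    · exact absurd hv hne
  calc (fiber Y v).card ≤ _ := Finset.card_le_card_of_injOn _ hmaps (fiber_injOn hbond v)
    _ ≤ d - 1 := by
        have := Finset.card_image_le (s := (Finset.univ : Finset (Fin (d-1))))
          (f := fun i => ((Function.update v.1 i (v.1 i + 1), v.2) : SILSite d))
        simpa using this

lemma fiber_surface_L0 {Y : Finset (Sym2 (SILSite d))}
    (hbond : ∀ e ∈ Y, IsSILBond e) {v : SILSite d} (hv : v.2 = 0)
    {e : Sym2 (SILSite d)} (he : e ∈ fiber Y v) : ∀ x ∈ e, x.2 = 0 := by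
  obtain ⟨hmv, _, hspec, _, _⟩ := fiber_spec hbond he
  have hu : (oth v e).2 = 0 := by
    rcases fiber_oth_cases hbond he with ⟨i, hi⟩ | ⟨hne, _⟩
    · rw [hi]; exact hv
    · exact absurd hv hne
  intro x hx
  rw [← hspec, Sym2.mem_iff] at hx
  rcases hx with rfl | rfl
  · exact hv
  · exact hu

/-- Vertex set of a finite set of bonds (restated here). -/
noncomputable def silVertsAux (Y : Finset (Sym2 (SILSite d))) : Finset (SILSite d) :=
  Y.biUnion Sym2.endFinset

end SILAux

open SILAux

/-- In region I of the ground-state diagram (`β_b < 1/d`, `β_s < 1/(d-1)`),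
the empty configuration is a ground state of the formal Hamiltonian
`H(X) = -β_s|X_s| - β_b|X_b| + |S(X)| - C(X)`: any configuration `Y` differing
from `∅` on finitely many bonds has `H(Y) - H(∅) = H(Y) ≥ 0`. -/
theorem stmt_12 (d : ℕ) (hd : 3 ≤ d) (βs βb : ℝ)
    (hβb : βb < 1 / d) (hβs : βs < 1 / ((d : ℝ) - 1))
    (Y Ys Yb : Finset (Sym2 (SILSite d)))
    (hbond : ∀ e ∈ Y, IsSILBond e)
    (hsplit : Y = Ys ∪ Yb) (hdisj : Disjoint Ys Yb)
    (hYs : ∀ e ∈ Ys, ∀ x ∈ e, x.2 = 0)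
    (hYb : ∀ e ∈ Yb, ∃ x ∈ e, x.2 ≠ 0) :
    0 ≤ -βs * Ys.card - βb * Yb.card + (silVerts Y).card - numComp Y := by
  classical
  have hd1 : (0:ℝ) < (d:ℝ) - 1 := by
    have : (3:ℝ) ≤ (d:ℝ) := by exact_mod_cast hd
    linarith
  have hd0 : (0:ℝ) < (d:ℝ) := by linarith
  -- the weight function
  set w : Sym2 (SILSite d) → ℝ :=
    fun e => if e ∈ Ys then 1/((d:ℝ)-1) else 1/(d:ℝ) with hw
  have hwnn : ∀ e, 0 ≤ w e := by
    intro e; rw [hw]; dsimp only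
    split <;> positivity
  -- the equivalence relation of numComp
  set r : {e // e ∈ Y} → {e // e ∈ Y} → Prop :=
    fun e f => ∃ x, x ∈ e.1 ∧ x ∈ f.1 with hrr
  letI : Fintype (Quot r) := Fintype.ofFinite _
  -- vertex sets of classes
  set VC : Quot r → Finset (SILSite d) := fun q =>
    (Y.filter (fun e => ∃ he : e ∈ Y, Quot.mk r ⟨e, he⟩ = q)).biUnion
      Sym2.endFinset with hVCdef
  have hVC : ∀ (q : Quot r) (v : SILSite d),
      v ∈ VC q ↔ ∃ e, ∃ he : e ∈ Y, Quot.mk r ⟨e, he⟩ = q ∧ v ∈ e := by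
    intro q v
    rw [hVCdef]
    simp only [Finset.mem_biUnion, Finset.mem_filter, SILAux.mem_endFinset]
    constructor
    · rintro ⟨e, ⟨heY, he', hq⟩, hv⟩
      exact ⟨e, he', hq, hv⟩
    · rintro ⟨e, he, hq, hv⟩
      exact ⟨e, ⟨he, he, hq⟩, hv⟩
  have hVCne : ∀ q : Quot r, (VC q).Nonempty := by
    intro q
    obtain ⟨⟨e, he⟩, hq⟩ := Quot.exists_rep q
    exact ⟨amin e, (hVC q (amin e)).2 ⟨e, he, hq, amin_mem e⟩⟩
  -- maximal vertex of each class
  have hex : ∀ q : Quot r, ∃ v ∈ VC q, ∀ u ∈ VC q, rank u ≤ rank v :=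
    fun q => Finset.exists_max_image (VC q) rank (hVCne q)
  choose M hMmem hMmax using hex
  -- M is injective
  have hMinj : Function.Injective M := by
    intro q q' hqq
    obtain ⟨e, he, hq, hv⟩ := (hVC q (M q)).1 (hMmem q)
    obtain ⟨e', he', hq', hv'⟩ := (hVC q' (M q')).1 (hMmem q')
    have hrel : r ⟨e, he⟩ ⟨e', he'⟩ := ⟨M q, hv, hqq ▸ hv'⟩
    rw [← hq, ← hq']
    exact Quot.sound hrel
  -- the fiber of any maximal vertex is empty
  have hMempty : ∀ q : Quot r, fiber Y (M q) = ∅ := by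
    intro q
    by_contra hne
    obtain ⟨e, he⟩ := Finset.nonempty_iff_ne_empty.2 hne
    obtain ⟨hv, _, hspec, hB, hlt⟩ := fiber_spec hbond he
    have heY : e ∈ Y := (Finset.mem_filter.1 he).1
    obtain ⟨e₀, he₀, hq₀, hv₀⟩ := (hVC q (M q)).1 (hMmem q)
    have hrel : r ⟨e, heY⟩ ⟨e₀, he₀⟩ := ⟨M q, hv, hv₀⟩
    have hq : Quot.mk r ⟨e, heY⟩ = q := (Quot.sound hrel).trans hq₀
    have hmemu : oth (M q) e ∈ e := by
      have h' : oth (M q) e ∈ s(M q, oth (M q) e) := Sym2.mem_mk_right _ _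
      rwa [hspec] at h'
    have huVC : oth (M q) e ∈ VC q := (hVC q _).2 ⟨e, heY, hq, hmemu⟩
    exact absurd (hMmax q _ huVC) (not_le.2 hlt)
  -- the set of maximal vertices
  set T : Finset (SILSite d) := Finset.image M Finset.univ with hT
  have hTS : T ⊆ silVerts Y := by
    intro v hv
    obtain ⟨q, _, hq⟩ := Finset.mem_image.1 hv
    obtain ⟨e, he, _, hv'⟩ := (hVC q (M q)).1 (hMmem q)
    exact Finset.mem_biUnion.2 ⟨e, he, SILAux.mem_endFinset.2 (hq ▸ hv')⟩
  have hTcard : T.card = numComp Y := by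
    rw [hT, Finset.card_image_of_injective _ hMinj, Finset.card_univ]
    rw [numComp, Nat.card_eq_fintype_card]
  -- per-fiber weight bound
  have hfiber1 : ∀ v : SILSite d, ∑ e ∈ fiber Y v, w e ≤ 1 := by
    intro v
    by_cases hv : v.2 = 0
    · -- surface vertex: every bond of the fiber is in Ys
      have hmem : ∀ e ∈ fiber Y v, w e = 1/((d:ℝ)-1) := by
        intro e he
        have hL0 := fiber_surface_L0 hbond hv he
        have heY : e ∈ Y := (Finset.mem_filter.1 he).1
        have heYs : e ∈ Ys := by
          rcases Finset.mem_union.1 (hsplit ▸ heY) with h | h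
          · exact h
          · obtain ⟨x, hx, hx2⟩ := hYb e h
            exact absurd (hL0 x hx) hx2
        rw [hw]; exact if_pos heYs
      rw [Finset.sum_congr rfl hmem, Finset.sum_const, nsmul_eq_mul]
      have hcard : ((fiber Y v).card : ℝ) ≤ (d:ℝ) - 1 := by
        have h1 := fiber_card_le_surface hbond v hv
        have : (((d:ℕ) - 1 : ℕ) : ℝ) = (d:ℝ) - 1 := by
          rw [Nat.cast_sub (by omega)]; simp
        rw [← this]
        exact_mod_cast h1
      calc ((fiber Y v).card : ℝ) * (1/((d:ℝ)-1))
          ≤ ((d:ℝ)-1) * (1/((d:ℝ)-1)) :=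
            mul_le_mul_of_nonneg_right hcard (by positivity)
        _ = 1 := mul_one_div_cancel hd1.ne'
    · -- bulk vertex: every bond of the fiber is in Yb
      have hmem : ∀ e ∈ fiber Y v, w e = 1/(d:ℝ) := by
        intro e he
        obtain ⟨hve, _, _, _, _⟩ := fiber_spec hbond he
        have heYs : e ∉ Ys := fun hmem => hv (hYs e hmem v hve)
        rw [hw]; exact if_neg heYs
      rw [Finset.sum_congr rfl hmem, Finset.sum_const, nsmul_eq_mul]
      have hcard : ((fiber Y v).card : ℝ) ≤ (d:ℝ) := by
        exact_mod_cast fiber_card_le hbond v hd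
      calc ((fiber Y v).card : ℝ) * (1/(d:ℝ))
          ≤ (d:ℝ) * (1/(d:ℝ)) := mul_le_mul_of_nonneg_right hcard (by positivity)
        _ = 1 := mul_one_div_cancel hd0.ne'
  -- total weight is at most |S| - C
  have hmaps : ∀ e ∈ Y, amin e ∈ silVerts Y := fun e he =>
    Finset.mem_biUnion.2 ⟨e, he, SILAux.mem_endFinset.2 (amin_mem e)⟩
  have hsumfib : ∑ v ∈ silVerts Y, ∑ e ∈ fiber Y v, w e = ∑ e ∈ Y, w e :=
    Finset.sum_fiberwise_of_maps_to hmaps w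
  have hsdiff : ∑ v ∈ silVerts Y \ T, (∑ e ∈ fiber Y v, w e)
      + ∑ v ∈ T, (∑ e ∈ fiber Y v, w e)
      = ∑ v ∈ silVerts Y, ∑ e ∈ fiber Y v, w e :=
    Finset.sum_sdiff hTS
  have hT0 : ∑ v ∈ T, (∑ e ∈ fiber Y v, w e) = 0 := by
    refine Finset.sum_eq_zero ?_
    intro v hv
    obtain ⟨q, _, hq⟩ := Finset.mem_image.1 hv
    rw [← hq, hMempty q, Finset.sum_empty]
  have hSd : ∑ v ∈ silVerts Y \ T, (∑ e ∈ fiber Y v, w e)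
      ≤ ((silVerts Y).card : ℝ) - (T.card : ℝ) := by
    calc ∑ v ∈ silVerts Y \ T, (∑ e ∈ fiber Y v, w e)
        ≤ ∑ v ∈ silVerts Y \ T, (1:ℝ) :=
          Finset.sum_le_sum (fun v _ => hfiber1 v)
      _ = ((silVerts Y \ T).card : ℝ) := by rw [Finset.sum_const, nsmul_eq_mul, mul_one]
      _ = ((silVerts Y).card : ℝ) - (T.card : ℝ) := by
          rw [Finset.card_sdiff_of_subset hTS, Nat.cast_sub (Finset.card_le_card hTS)]
  have hkey : ∑ e ∈ Y, w e ≤ ((silVerts Y).card : ℝ) - (numComp Y : ℝ) := by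
    rw [← hsumfib, ← hsdiff]
    rw [hT0, add_zero, ← hTcard]
    exact hSd
  -- compute the total weight
  have hwsum : ∑ e ∈ Y, w e
      = (Ys.card : ℝ) * (1/((d:ℝ)-1)) + (Yb.card : ℝ) * (1/(d:ℝ)) := by
    have h1 : ∀ e ∈ Ys, w e = 1/((d:ℝ)-1) := by
      intro e he; simp only [hw]; exact if_pos he
    have h2 : ∀ e ∈ Yb, w e = 1/(d:ℝ) := by
      intro e he; simp only [hw]
      exact if_neg (Finset.disjoint_right.1 hdisj he)
    rw [hsplit, Finset.sum_union hdisj, Finset.sum_congr rfl h1,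
      Finset.sum_congr rfl h2, Finset.sum_const, Finset.sum_const,
      nsmul_eq_mul, nsmul_eq_mul]
  -- conclude
  have hbs : βs * (Ys.card : ℝ) ≤ (Ys.card : ℝ) * (1/((d:ℝ)-1)) := by
    have h0 : (0:ℝ) ≤ (Ys.card : ℝ) := Nat.cast_nonneg _
    nlinarith [mul_le_mul_of_nonneg_left hβs.le h0]
  have hbb : βb * (Yb.card : ℝ) ≤ (Yb.card : ℝ) * (1/(d:ℝ)) := by
    have h0 : (0:ℝ) ≤ (Yb.card : ℝ) := Nat.cast_nonneg _
    nlinarith [mul_le_mul_of_nonneg_left hβb.le h0]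
  rw [hwsum] at hkey
  linarith
end
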